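/- Let Γ : (0,∞)³ → (0,∞) be monotonically increasing, homogeneous of degree 1 in (V, W), and subhomogeneous in S. Let S, V, W : (a,b) → (0,∞) with S_max ≤ ξ·S_min, V_max ≤ ξ·V_min, W_max ≤ ξ·W_min for ξ ≥ 1. Then for any recorded space value s_b with S_min ≤ s_b ≤ S_max: Γ(s_b, ∫_a^b V, ∫_a^b W) ≤ ξ²·∫_a^b Γ(S(t), V(t), W(t)) dt. -/

import Mathlib

open MeasureTheory

/-- Infimum of a resource over a block timespan (a,b). -/
noncomputable def blockInf (f : ℝ → ℝ) (a b : ℝ) : ℝ := sInf (f '' Set.Ioo a b)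

/-- Supremum of a resource over a block timespan (a,b). -/
noncomputable def blockSup (f : ℝ → ℝ) (a b : ℝ) : ℝ := sSup (f '' Set.Ioo a b)

lemma int_eq_Ioo' {a b : ℝ} (hab : a ≤ b) (f : ℝ → ℝ) :
    ∫ t in a..b, f t = ∫ t in Set.Ioo a b, f t := by
  rw [intervalIntegral.integral_of_le hab, MeasureTheory.integral_Ioc_eq_integral_Ioo]

lemma int_le_const' {a b : ℝ} (hab : a < b) {f : ℝ → ℝ} {C : ℝ}
    (hf : IntervalIntegrable f volume a b)
    (h : ∀ t ∈ Set.Ioo a b, f t ≤ C) :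
    ∫ t in a..b, f t ≤ (b - a) * C := by
  have hfi : IntegrableOn f (Set.Ioo a b) volume :=
    (hf.1).mono_set Set.Ioo_subset_Ioc_self
  rw [int_eq_Ioo' hab.le]
  calc ∫ t in Set.Ioo a b, f t ≤ ∫ _t in Set.Ioo a b, C :=
        setIntegral_mono_on hfi (integrableOn_const (by simp))
          measurableSet_Ioo h
    _ = (b - a) * C := by
        rw [setIntegral_const]
        simp [Real.volume_Ioo, ENNReal.toReal_ofReal (sub_nonneg.2 hab.le), smul_eq_mul, hab.le]

lemma const_le_int' {a b : ℝ} (hab : a < b) {f : ℝ → ℝ} {c : ℝ}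
    (hf : IntervalIntegrable f volume a b)
    (h : ∀ t ∈ Set.Ioo a b, c ≤ f t) :
    (b - a) * c ≤ ∫ t in a..b, f t := by
  have hfi : IntegrableOn f (Set.Ioo a b) volume :=
    (hf.1).mono_set Set.Ioo_subset_Ioc_self
  rw [int_eq_Ioo' hab.le]
  calc (b - a) * c = ∫ _t in Set.Ioo a b, c := by
        rw [setIntegral_const]
        simp [Real.volume_Ioo, ENNReal.toReal_ofReal (sub_nonneg.2 hab.le), smul_eq_mul, hab.le]
    _ ≤ ∫ t in Set.Ioo a b, f t :=
        setIntegral_mono_on (integrableOn_const (by simp))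
          hfi measurableSet_Ioo h

theorem stmt_14 (Γ : ℝ → ℝ → ℝ → ℝ)
    (hmono : ∀ s v w s' v' w' : ℝ, 0 < s → 0 < v → 0 < w →
      s ≤ s' → v ≤ v' → w ≤ w' → Γ s v w ≤ Γ s' v' w')
    (hhom : ∀ s v w α : ℝ, 0 < s → 0 < v → 0 < w → 0 < α →
      Γ s (α * v) (α * w) = α * Γ s v w)
    (hsub : ∀ s v w α : ℝ, 0 < s → 0 < v → 0 < w → 1 ≤ α →
      Γ (α * s) v w ≤ α * Γ s v w)
    (a b : ℝ) (hab : a < b)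
    (S V W : ℝ → ℝ)
    (hSpos : ∀ t ∈ Set.Ioo a b, 0 < S t)
    (hVpos : ∀ t ∈ Set.Ioo a b, 0 < V t)
    (hWpos : ∀ t ∈ Set.Ioo a b, 0 < W t)
    (hSinf : 0 < blockInf S a b) (hVinf : 0 < blockInf V a b)
    (hWinf : 0 < blockInf W a b)
    (hSbd : BddAbove (S '' Set.Ioo a b)) (hVbd : BddAbove (V '' Set.Ioo a b))
    (hWbd : BddAbove (W '' Set.Ioo a b))
    (hVint : IntervalIntegrable V volume a b)
    (hWint : IntervalIntegrable W volume a b)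
    (hΓint : IntervalIntegrable (fun t => Γ (S t) (V t) (W t)) volume a b)
    (ξ : ℝ) (hξ : 1 ≤ ξ)
    (hSsm : blockSup S a b ≤ ξ * blockInf S a b)
    (hVsm : blockSup V a b ≤ ξ * blockInf V a b)
    (hWsm : blockSup W a b ≤ ξ * blockInf W a b)
    (sb : ℝ) (hsb₁ : blockInf S a b ≤ sb) (hsb₂ : sb ≤ blockSup S a b) :
    Γ sb (∫ t in a..b, V t) (∫ t in a..b, W t) ≤
      ξ ^ 2 * ∫ t in a..b, Γ (S t) (V t) (W t) := by
  have hξ0 : 0 < ξ := lt_of_lt_of_le one_pos hξ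
  have hba : 0 < b - a := sub_pos.2 hab
  -- pointwise bounds
  have hlow : ∀ (f : ℝ → ℝ), (∀ t ∈ Set.Ioo a b, 0 < f t) →
      ∀ t ∈ Set.Ioo a b, blockInf f a b ≤ f t := by
    intro f hf t ht
    exact csInf_le ⟨0, by rintro x ⟨t', ht', rfl⟩; exact (hf t' ht').le⟩ ⟨t, ht, rfl⟩
  have hShigh : ∀ t ∈ Set.Ioo a b, S t ≤ blockSup S a b :=
    fun t ht => le_csSup hSbd ⟨t, ht, rfl⟩
  have hVhigh : ∀ t ∈ Set.Ioo a b, V t ≤ blockSup V a b :=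
    fun t ht => le_csSup hVbd ⟨t, ht, rfl⟩
  have hWhigh : ∀ t ∈ Set.Ioo a b, W t ≤ blockSup W a b :=
    fun t ht => le_csSup hWbd ⟨t, ht, rfl⟩
  -- integral bounds
  have hVlo : (b - a) * blockInf V a b ≤ ∫ t in a..b, V t :=
    const_le_int' hab hVint (hlow V hVpos)
  have hWlo : (b - a) * blockInf W a b ≤ ∫ t in a..b, W t :=
    const_le_int' hab hWint (hlow W hWpos)
  have hVhi : ∫ t in a..b, V t ≤ (ξ * (b - a)) * blockInf V a b := by
    calc ∫ t in a..b, V t ≤ (b - a) * blockSup V a b :=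
          int_le_const' hab hVint hVhigh
      _ ≤ (b - a) * (ξ * blockInf V a b) := by nlinarith
      _ = (ξ * (b - a)) * blockInf V a b := by ring
  have hWhi : ∫ t in a..b, W t ≤ (ξ * (b - a)) * blockInf W a b := by
    calc ∫ t in a..b, W t ≤ (b - a) * blockSup W a b :=
          int_le_const' hab hWint hWhigh
      _ ≤ (b - a) * (ξ * blockInf W a b) := by nlinarith
      _ = (ξ * (b - a)) * blockInf W a b := by ring
  have hVpos' : 0 < ∫ t in a..b, V t := lt_of_lt_of_le (by positivity) hVlo
  have hWpos' : 0 < ∫ t in a..b, W t := lt_of_lt_of_le (by positivity) hWlo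
  have hsbpos : 0 < sb := lt_of_lt_of_le hSinf hsb₁
  have hsbhi : sb ≤ ξ * blockInf S a b := le_trans hsb₂ hSsm
  -- pointwise lower bound on Γ
  have hΓlow : ∀ t ∈ Set.Ioo a b,
      Γ (blockInf S a b) (blockInf V a b) (blockInf W a b) ≤ Γ (S t) (V t) (W t) :=
    fun t ht => hmono _ _ _ _ _ _ hSinf hVinf hWinf
      (hlow S hSpos t ht) (hlow V hVpos t ht) (hlow W hWpos t ht)
  have hΓint_lo : (b - a) * Γ (blockInf S a b) (blockInf V a b) (blockInf W a b) ≤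
      ∫ t in a..b, Γ (S t) (V t) (W t) := const_le_int' hab hΓint hΓlow
  calc Γ sb (∫ t in a..b, V t) (∫ t in a..b, W t)
      ≤ Γ (ξ * blockInf S a b) ((ξ * (b - a)) * blockInf V a b)
          ((ξ * (b - a)) * blockInf W a b) :=
        hmono _ _ _ _ _ _ hsbpos hVpos' hWpos' hsbhi hVhi hWhi
    _ = (ξ * (b - a)) * Γ (ξ * blockInf S a b) (blockInf V a b) (blockInf W a b) :=
        hhom _ _ _ _ (by positivity) hVinf hWinf (by positivity)
    _ ≤ (ξ * (b - a)) * (ξ * Γ (blockInf S a b) (blockInf V a b) (blockInf W a b)) := by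
        apply mul_le_mul_of_nonneg_left _ (by positivity)
        exact hsub _ _ _ _ hSinf hVinf hWinf hξ
    _ = ξ ^ 2 * ((b - a) * Γ (blockInf S a b) (blockInf V a b) (blockInf W a b)) := by
        ring
    _ ≤ ξ ^ 2 * ∫ t in a..b, Γ (S t) (V t) (W t) :=
        mul_le_mul_of_nonneg_left hΓint_lo (by positivity)
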